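/- For every n ≥ 1, the number of words L ∈ 𝓛_n with no P1-match (equivalently, lattice paths from (0,0) to (n,n) that stay weakly above the subdiagonal y = x − 1) equals the Catalan number C_{n+1} = (1/(n+2))·binom(2n+2, n+1). -/

import Mathlib

/-!
Words over the alphabet {E, N} are encoded as `List Bool`,
with `true` representing an east step `E` and `false` a north step `N`.
The word `w = w_1 ⋯ w_{2n}` corresponds to the lattice path from `(0,0)` to
`(n,n)` whose `j`-th step is east if `w_j = true` and north if `w_j = false`.
-/

/-- `w ∈ 𝓛_n`: the word `w` has exactly `n` `E`'s and `n` `N`'s. -/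
def memL (n : ℕ) (w : List Bool) : Prop :=
  w.count true = n ∧ w.count false = n

/-- The (0-indexed, increasing) list of positions at which the letter `b` occurs in `w`. -/
def occPos (w : List Bool) (b : Bool) : List ℕ :=
  (List.range w.length).filter (fun j => w.getD j (!b) == b)

/-- `ps_w({i, i+1})` (with `i` 1-indexed): the length-4 word obtained from `w` by
deleting, for each `j ∉ {i, i+1}`, the `j`-th occurrence of `E` and the `j`-th
occurrence of `N` (counted from left to right); i.e. the word formed by the
`i`-th and `(i+1)`-th occurrences of `E` and of `N`, read in their original order. -/
def pairedSubword (w : List Bool) (i : ℕ) : List Bool :=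
  let keep : List ℕ := [(occPos w true).getD (i-1) 0, (occPos w true).getD i 0,
                        (occPos w false).getD (i-1) 0, (occPos w false).getD i 0]
  ((List.range w.length).filter (fun j => keep.contains j)).map (fun j => w.getD j true)

/-- `P`-mch(w): the number of paired steps `i` with `1 ≤ i ≤ n-1` at which the
paired pattern `P` matches in `w ∈ 𝓛_n`. -/
def pmch (n : ℕ) (P w : List Bool) : ℕ :=
  ((Finset.Icc 1 (n-1)).filter (fun i => pairedSubword w i = P)).card

def P1 : List Bool := [true, true, false, false]   -- EENN
def P2 : List Bool := [true, false, true, false]   -- ENEN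
def P3 : List Bool := [false, true, true, false]   -- NEEN
def P4 : List Bool := [true, false, false, true]   -- ENNE
def P5 : List Bool := [false, true, false, true]   -- NENE
def P6 : List Bool := [false, false, true, true]   -- NNEE

lemma occPos_nil (b : Bool) : occPos [] b = [] := rfl

lemma occPos_cons (a b : Bool) (w : List Bool) :
    occPos (a :: w) b = (if a = b then [0] else []) ++ (occPos w b).map (· + 1) := by
  unfold occPos
  rw [List.length_cons, List.range_succ_eq_map, List.filter_cons, List.filter_map]
  by_cases hab : a = b <;>
    simp [hab, Function.comp_def, Nat.succ_eq_add_one]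

lemma length_occPos (w : List Bool) (b : Bool) : (occPos w b).length = w.count b := by
  induction w with
  | nil => rfl
  | cons a w ih =>
    by_cases h : a = b <;> simp [occPos_cons, List.count_cons, h, ih]

lemma sorted_occPos (w : List Bool) (b : Bool) : (occPos w b).Pairwise (· < ·) :=
  List.pairwise_lt_range.filter _

lemma mem_occPos {w : List Bool} {b : Bool} {j : ℕ} :
    j ∈ occPos w b ↔ j < w.length ∧ w.getD j (!b) = b := by
  simp [occPos, List.mem_filter]

lemma getD_occPos {w : List Bool} {b : Bool} {j : ℕ} (h : j ∈ occPos w b) (c : Bool) :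
    w.getD j c = b := by
  rw [mem_occPos] at h
  rw [List.getD_eq_getElem _ _ h.1]
  rw [List.getD_eq_getElem _ _ h.1] at h
  exact h.2

lemma count_take (w : List Bool) (b : Bool) (k : ℕ) :
    (w.take k).count b = ((occPos w b).filter (fun x => x < k)).length := by
  induction w generalizing k with
  | nil => simp [occPos_nil]
  | cons a w ih =>
    cases k with
    | zero => simp
    | succ k =>
      rw [List.take_succ_cons, List.count_cons, occPos_cons, List.filter_append,
        List.filter_map]
      have : (List.filter ((fun x => decide (x < k + 1)) ∘ (· + 1)) (occPos w b))
          = (occPos w b).filter (fun x => x < k) := by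
        apply List.filter_congr
        intro x _
        simp [Function.comp]
      rw [this]
      by_cases h : a = b <;> simp [h, ih]

lemma sorted_getD_lt_iff {L : List ℕ} (hL : L.Pairwise (· < ·)) {i : ℕ} (hi : i < L.length)
    (k : ℕ) : L.getD i 0 < k ↔ i < (L.filter (fun x => x < k)).length := by
  induction L generalizing i with
  | nil => simp at hi
  | cons x L ih =>
    have hx : ∀ y ∈ L, x < y := fun y hy => List.rel_of_pairwise_cons hL hy
    have hL' : L.Pairwise (· < ·) := hL.of_cons
    by_cases hxk : x < k
    · cases i with
      | zero => simp [hxk, List.filter_cons]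
      | succ j =>
        have hj : j < L.length := by simpa using hi
        rw [List.getD_cons_succ, List.filter_cons, if_pos (by simpa using hxk)]
        rw [ih hL' hj]
        simp
    · have hfil : L.filter (fun x => x < k) = [] := by
        apply List.filter_eq_nil_iff.mpr
        intro y hy
        simp only [decide_eq_true_eq]
        have := hx y hy
        omega
      rw [List.filter_cons, if_neg (by simpa using hxk), hfil]
      cases i with
      | zero => simp [hxk]
      | succ j =>
        have hj : j < L.length := by simpa using hi
        have hmem : L.getD j 0 ∈ L := by
          rw [List.getD_eq_getElem _ _ hj]; exact List.getElem_mem _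
        have := hx _ hmem
        rw [List.getD_cons_succ]
        simp only [List.length_nil]
        omega

instance : IsAntisymm ℕ (· < ·) := ⟨fun a b h1 h2 => by omega⟩


lemma sorted_getD_lt_getD {L : List ℕ} (hL : L.Pairwise (· < ·)) {a b : ℕ} (hab : a < b)
    (hb : b < L.length) : L.getD a 0 < L.getD b 0 := by
  rw [List.getD_eq_getElem _ _ (by omega), List.getD_eq_getElem _ _ hb]
  simpa using hL.rel_get_of_lt (a := ⟨a, by omega⟩) (b := ⟨b, hb⟩) (by simpa using hab)

lemma pairedSubword_eq_P1_iff {n : ℕ} {w : List Bool} (hw : memL n w) {i : ℕ}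
    (h1 : 1 ≤ i) (h2 : i ≤ n - 1) (hn : 1 ≤ n) :
    pairedSubword w i = P1 ↔ (occPos w true).getD i 0 < (occPos w false).getD (i-1) 0 := by
  obtain ⟨hwt, hwf⟩ := hw
  have hElen : (occPos w true).length = n := by rw [length_occPos, hwt]
  have hFlen : (occPos w false).length = n := by rw [length_occPos, hwf]
  have hi : i < n := by omega
  have hne : ∀ x ∈ occPos w true, ∀ y ∈ occPos w false, x ≠ y := by
    intro x hx y hy h
    subst h
    have h1' := getD_occPos hx true
    rw [getD_occPos hy true] at h1'
    exact absurd h1' (by simp)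
  set e1 := (occPos w true).getD (i-1) 0 with he1
  set e2 := (occPos w true).getD i 0 with he2
  set f1 := (occPos w false).getD (i-1) 0 with hf1
  set f2 := (occPos w false).getD i 0 with hf2
  have he1m : e1 ∈ occPos w true := by
    rw [he1, List.getD_eq_getElem _ _ (by omega)]; exact List.getElem_mem _
  have he2m : e2 ∈ occPos w true := by
    rw [he2, List.getD_eq_getElem _ _ (by omega)]; exact List.getElem_mem _
  have hf1m : f1 ∈ occPos w false := by
    rw [hf1, List.getD_eq_getElem _ _ (by omega)]; exact List.getElem_mem _
  have hf2m : f2 ∈ occPos w false := by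
    rw [hf2, List.getD_eq_getElem _ _ (by omega)]; exact List.getElem_mem _
  have he12 : e1 < e2 := sorted_getD_lt_getD (sorted_occPos w true) (by omega) (by omega)
  have hf12 : f1 < f2 := sorted_getD_lt_getD (sorted_occPos w false) (by omega) (by omega)
  have hw1 : w.getD e1 true = true := getD_occPos he1m true
  have hw2 : w.getD e2 true = true := getD_occPos he2m true
  have hw3 : w.getD f1 true = false := getD_occPos hf1m true
  have hw4 : w.getD f2 true = false := getD_occPos hf2m true
  have hlen : e1 < w.length ∧ e2 < w.length ∧ f1 < w.length ∧ f2 < w.length :=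
    ⟨(mem_occPos.mp he1m).1, (mem_occPos.mp he2m).1, (mem_occPos.mp hf1m).1,
      (mem_occPos.mp hf2m).1⟩
  set keep : List ℕ := [e1, e2, f1, f2] with hkeep
  have hknd : keep.Nodup := by
    have n1 := hne _ he1m _ hf1m
    have n2 := hne _ he1m _ hf2m
    have n3 := hne _ he2m _ hf1m
    have n4 := hne _ he2m _ hf2m
    rw [hkeep]
    refine List.nodup_cons.mpr ⟨?_, List.nodup_cons.mpr ⟨?_, List.nodup_cons.mpr
      ⟨?_, List.nodup_singleton _⟩⟩⟩ <;> simp <;> omega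
  set SK : List ℕ := (List.range w.length).filter (fun j => keep.contains j) with hSK
  have hps : pairedSubword w i = SK.map (fun j => w.getD j true) := rfl
  have hSKsorted : SK.Pairwise (· < ·) := List.pairwise_lt_range.filter _
  have hSKnd : SK.Nodup := hSKsorted.imp fun h => Nat.ne_of_lt h
  have hperm : List.Perm SK keep := by
    rw [List.perm_ext_iff_of_nodup hSKnd hknd]
    intro a
    simp only [hSK, List.mem_filter, List.mem_range, List.elem_eq_mem,
      decide_eq_true_eq, and_iff_right_iff_imp]
    intro ha
    simp only [hkeep, List.mem_cons, List.not_mem_nil, or_false] at ha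
    rcases ha with rfl | rfl | rfl | rfl <;> omega
  constructor
  · -- pairedSubword = P1 → e2 < f1
    intro hmain
    rw [hps] at hmain
    have hlen4 : SK.length = 4 := by rw [hperm.length_eq, hkeep]; rfl
    obtain ⟨x1, x2, x3, x4, hSKeq⟩ : ∃ a b c d, SK = [a, b, c, d] := by
      match hm : SK, hlen4 with
      | [a, b, c, d], _ => exact ⟨a, b, c, d, rfl⟩
    rw [hSKeq] at hmain hperm hSKsorted
    simp only [List.map_cons, List.map_nil, P1, List.cons.injEq, and_true] at hmain
    obtain ⟨hx1, hx2, hx3, hx4⟩ := hmain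
    have hs12 : x1 < x2 ∧ x2 < x3 ∧ x3 < x4 := by
      simp only [List.pairwise_cons, List.mem_cons, List.not_mem_nil, or_false,
        List.mem_singleton] at hSKsorted
      obtain ⟨ha, hb, hc, -⟩ := hSKsorted
      exact ⟨ha x2 (by simp), hb x3 (by simp), hc x4 (by simp)⟩
    -- memberships: every keep element is one of x1..x4, and vice versa
    have hmemk : ∀ y, y ∈ keep ↔ y ∈ [x1, x2, x3, x4] := fun y => (hperm.mem_iff (a := y)).symm
    -- x1, x2 are east positions
    have hxe : ∀ x, x ∈ [x1, x2, x3, x4] → w.getD x true = true → x = e1 ∨ x = e2 := by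
      intro x hx hxt
      have hxk : x ∈ keep := (hmemk x).mpr hx
      rw [hkeep] at hxk
      simp only [List.mem_cons, List.not_mem_nil, or_false] at hxk
      rcases hxk with rfl | rfl | rfl | rfl
      · exact Or.inl rfl
      · exact Or.inr rfl
      · rw [hw3] at hxt; exact absurd hxt (by simp)
      · rw [hw4] at hxt; exact absurd hxt (by simp)
    have hx1e := hxe x1 (by simp) hx1
    have hx2e := hxe x2 (by simp) hx2
    have he2x : e2 ≤ x2 := by rcases hx1e with rfl | rfl <;> rcases hx2e with rfl | rfl <;> omega
    have hf1x : x3 ≤ f1 := by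
      have hf1x4 : f1 ∈ [x1, x2, x3, x4] := (hmemk f1).mp (by rw [hkeep]; simp)
      simp only [List.mem_cons, List.not_mem_nil, or_false] at hf1x4
      have hne1 : f1 ≠ x1 := by
        rcases hx1e with rfl | rfl
        · exact fun h => hne _ he1m _ hf1m h.symm
        · exact fun h => hne _ he2m _ hf1m h.symm
      have hne2 : f1 ≠ x2 := by
        rcases hx2e with rfl | rfl
        · exact fun h => hne _ he1m _ hf1m h.symm
        · exact fun h => hne _ he2m _ hf1m h.symm
      rcases hf1x4 with h | h | h | h <;> omega
    omega
  · -- e2 < f1 → pairedSubword = P1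
    intro hlt
    have hsorted : keep.Pairwise (· < ·) := by
      rw [hkeep]
      simp only [List.pairwise_cons, List.mem_cons, List.mem_singleton, List.not_mem_nil,
        or_false, List.Pairwise.nil, and_true]
      refine ⟨fun b hb => ?_, fun b hb => ?_, fun b hb => ?_, fun b hb => hb.elim⟩
      · rcases hb with rfl | rfl | rfl <;> omega
      · rcases hb with rfl | rfl <;> omega
      · subst hb; omega
    have hSKk : SK = keep := List.Perm.eq_of_pairwise (fun a b _ _ h1 h2 => by omega) hSKsorted hsorted hperm
    rw [hps, hSKk, hkeep]
    simp only [List.map_cons, List.map_nil, hw1, hw2, hw3, hw4, P1]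

lemma pmch_eq_zero_iff {n : ℕ} {w : List Bool} (hw : memL n w) (hn : 1 ≤ n) :
    pmch n P1 w = 0 ↔ ∀ k, (w.take k).count true ≤ (w.take k).count false + 1 := by
  have hElen : (occPos w true).length = n := by rw [length_occPos, hw.1]
  have hFlen : (occPos w false).length = n := by rw [length_occPos, hw.2]
  constructor
  · intro hz k
    by_contra hcon
    push_neg at hcon
    set a := (w.take k).count false with ha
    have hct : a + 2 ≤ (w.take k).count true := by omega
    have hctn : (w.take k).count true ≤ n := by
      rw [← hw.1]; exact (List.take_sublist k w).count_le _
    have han : a + 2 ≤ n := le_trans hct hctn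
    have haf : ((occPos w false).filter (fun x => x < k)).length = a := (count_take w false k).symm
    have hae : a + 2 ≤ ((occPos w true).filter (fun x => x < k)).length := by
      rw [← count_take]; exact hct
    have hElt : (occPos w true).getD (a+1) 0 < k :=
      (sorted_getD_lt_iff (sorted_occPos w true) (by omega) k).mpr (by omega)
    have hFge : ¬ (occPos w false).getD a 0 < k := by
      rw [sorted_getD_lt_iff (sorted_occPos w false) (by omega) k]
      omega
    have hmatch : pairedSubword w (a+1) = P1 := by
      rw [pairedSubword_eq_P1_iff hw (by omega) (by omega) hn]
      simp only [Nat.add_sub_cancel]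
      omega
    have hmem : a + 1 ∈ Finset.Icc 1 (n-1) := by
      rw [Finset.mem_Icc]; omega
    have := Finset.filter_eq_empty_iff.mp (Finset.card_eq_zero.mp hz) hmem
    exact this hmatch
  · intro hpre
    rw [pmch, Finset.card_eq_zero, Finset.filter_eq_empty_iff]
    intro i hi hP
    rw [Finset.mem_Icc] at hi
    rw [pairedSubword_eq_P1_iff hw hi.1 hi.2 hn] at hP
    set k := (occPos w true).getD i 0 + 1 with hk
    have hct : i < ((occPos w true).filter (fun x => x < k)).length := by
      rw [← sorted_getD_lt_iff (sorted_occPos w true) (by omega) k]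
      omega
    have hcf : ¬ (i - 1 < ((occPos w false).filter (fun x => x < k)).length) := by
      rw [← sorted_getD_lt_iff (sorted_occPos w false) (by omega) k]
      omega
    have h1 := hpre k
    rw [count_take w true k, count_take w false k] at h1
    omega

open DyckStep

def tS : Bool → DyckStep := fun b => if b then D else U
def tB : DyckStep → Bool := fun s => match s with | U => false | D => true

lemma tS_injective : Function.Injective tS := by
  intro a b h; cases a <;> cases b <;> simp [tS] at h ⊢
lemma tB_injective : Function.Injective tB := by
  intro a b h; cases a <;> cases b <;> simp [tB] at h ⊢
lemma tB_tS (b : Bool) : tB (tS b) = b := by cases b <;> rfl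
lemma tS_tB (s : DyckStep) : tS (tB s) = s := by cases s <;> rfl

lemma count_D_map (l : List Bool) : (l.map tS).count D = l.count true := by
  have h : D = tS true := rfl
  rw [h, List.count_map_of_injective _ _ tS_injective]
lemma count_U_map (l : List Bool) : (l.map tS).count U = l.count false := by
  have h : U = tS false := rfl
  rw [h, List.count_map_of_injective _ _ tS_injective]
lemma count_true_map (l : List DyckStep) : (l.map tB).count true = l.count D := by
  have h : true = tB D := rfl
  rw [h, List.count_map_of_injective _ _ tB_injective]
lemma count_false_map (l : List DyckStep) : (l.map tB).count false = l.count U := by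
  have h : false = tB U := rfl
  rw [h, List.count_map_of_injective _ _ tB_injective]

lemma dyck_decomp (p : DyckWord) (hne : p.toList ≠ []) :
    p.toList = U :: (p.toList.tail.dropLast ++ [D]) := by
  have hlen : p.toList.length = 2 * p.semilength :=
    DyckWord.two_mul_semilength_eq_length.symm
  have htne : p.toList.tail ≠ [] := by
    intro h
    have h1 : p.toList.length = 1 := by
      conv_lhs => rw [← List.cons_head_tail hne, h]
      simp
    omega
  conv_lhs => rw [← List.cons_head_tail hne, DyckWord.head_eq_U p hne]
  congr 1
  conv_lhs => rw [← List.dropLast_append_getLast htne]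
  congr 1
  rw [List.getLast_tail, DyckWord.getLast_eq_D p hne]

def goodSet (n : ℕ) : Set (List Bool) :=
  {w | w.count true = n ∧ w.count false = n ∧
    ∀ k, (w.take k).count true ≤ (w.take k).count false + 1}

def goodEquiv (n : ℕ) : goodSet n ≃ {p : DyckWord // p.semilength = n + 1} where
  toFun := fun ⟨w, hw⟩ =>
    ⟨⟨U :: (w.map tS ++ [D]), by
        simp [List.count_cons, List.count_append, count_D_map, count_U_map, hw.1, hw.2.1], by
        intro i
        cases i with
        | zero => simp
        | succ j =>
          rw [List.take_succ_cons, List.count_cons, List.count_cons,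
            List.take_append, List.count_append, List.count_append,
            ← List.map_take, count_D_map, count_U_map]
          simp only [beq_iff_eq, reduceCtorEq, if_false, if_true, List.length_map]
          by_cases hj : j ≤ w.length
          · have h0 : j - w.length = 0 := by omega
            rw [h0]
            simp only [List.take_zero, List.count_nil]
            have := hw.2.2 j
            omega
          · have h1 : 1 ≤ j - w.length := by omega
            have h2 : (List.take (j - w.length) [D]) = [D] := by
              apply List.take_of_length_le; simpa using h1
            rw [h2, List.take_of_length_le (by omega)]
            simp [hw.1, hw.2.1, List.count_cons]⟩,
      by
        show List.count U _ = n + 1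
        simp [List.count_cons, List.count_append, count_U_map, hw.2.1]⟩
  invFun := fun ⟨p, hp⟩ =>
    ⟨(p.toList.tail.dropLast).map tB, by
      have hUD := p.count_U_eq_count_D
      have hU : p.toList.count U = n + 1 := hp
      have hD : p.toList.count D = n + 1 := by rw [← hUD, hU]
      have hne : p.toList ≠ [] := by
        intro h; rw [h] at hU; simp at hU
      have hdecomp := dyck_decomp p hne
      have hbD : p.toList.tail.dropLast.count D = n := by
        have h := hD
        rw [hdecomp] at h
        simp [List.count_cons, List.count_append] at h
        omega
      have hbU : p.toList.tail.dropLast.count U = n := by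
        have h := hU
        rw [hdecomp] at h
        simp [List.count_cons, List.count_append] at h
        omega
      refine ⟨by rw [count_true_map, hbD], by rw [count_false_map, hbU], ?_⟩
      intro k
      rw [← List.map_take, count_true_map, count_false_map]
      have hpre := p.count_D_le_count_U (k + 1)
      rw [hdecomp, List.take_succ_cons, List.count_cons, List.count_cons,
        List.take_append, List.count_append, List.count_append] at hpre
      simp only [beq_iff_eq, reduceCtorEq, if_false, if_true] at hpre
      have hcl : (List.take (k - p.toList.tail.dropLast.length) [D]).count U = 0 := by
        cases Nat.eq_zero_or_pos (k - p.toList.tail.dropLast.length) with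
        | inl h => rw [h]; simp
        | inr h =>
          rw [List.take_of_length_le (by simp only [List.length_cons, List.length_nil]; omega)]
          simp
      have hcd : (List.take (k - p.toList.tail.dropLast.length) [D]).count D ≤ 1 :=
        le_trans List.count_le_length (by simp [List.length_take])
      omega⟩
  left_inv := fun ⟨w, hw⟩ => by
    apply Subtype.ext
    simp only [List.tail_cons, List.dropLast_concat, List.map_map]
    rw [show tB ∘ tS = id from funext tB_tS, List.map_id]
  right_inv := fun ⟨p, hp⟩ => by
    apply Subtype.ext
    apply DyckWord.ext
    have hU : p.toList.count U = n + 1 := hp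
    have hne : p.toList ≠ [] := by
      intro h; rw [h] at hU; simp at hU
    show U :: (((p.toList.tail.dropLast).map tB).map tS ++ [D]) = p.toList
    rw [List.map_map, show tS ∘ tB = id from funext tS_tB, List.map_id, ← dyck_decomp p hne]

theorem count_P1_avoiding_eq_catalan (n : ℕ) (hn : 1 ≤ n) :
    {w : List Bool | memL n w ∧ pmch n P1 w = 0}.ncard
      = (2*n+2).choose (n+1) / (n+2) := by
  have hset : {w : List Bool | memL n w ∧ pmch n P1 w = 0} = goodSet n := by
    ext w
    simp only [Set.mem_setOf_eq, goodSet, memL]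
    constructor
    · rintro ⟨hm, hz⟩
      exact ⟨hm.1, hm.2, (pmch_eq_zero_iff hm hn).mp hz⟩
    · rintro ⟨h1, h2, h3⟩
      exact ⟨⟨h1, h2⟩, (pmch_eq_zero_iff ⟨h1, h2⟩ hn).mpr h3⟩
  have hcb : Nat.centralBinom (n+1) = (2*n+2).choose (n+1) := by
    unfold Nat.centralBinom
    have h2 : 2*(n+1) = 2*n+2 := by ring
    rw [h2]
  rw [hset, ← Nat.card_coe_set_eq, Nat.card_congr (goodEquiv n), Nat.card_eq_fintype_card,
    DyckWord.card_dyckWord_semilength_eq_catalan, catalan_eq_centralBinom_div, hcb]
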